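/- For every integer n ≥ 2, the number (n+1)(n+2)/2 is not a power of 3; equivalently, there is no k ∈ ℕ with (n+1)(n+2) = 2·3^k. In particular, log₃((n+1)(n+2)/2) is not an integer for n ≥ 2. -/

import Mathlib

lemma aux_nat (n : ℕ) (hn : 2 ≤ n) : ¬ ∃ k : ℕ, (n + 1) * (n + 2) = 2 * 3 ^ k := by
  rintro ⟨k, h⟩
  have hp : Nat.Prime 3 := by norm_num
  have hk1 : 1 ≤ k := by
    rcases Nat.eq_zero_or_pos k with rfl | h1
    · simp at h; nlinarith
    · exact h1
  have h3 : (3 : ℕ) ∣ (n + 1) * (n + 2) := by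
    rw [h]; exact Dvd.dvd.mul_left (dvd_pow_self 3 (Nat.one_le_iff_ne_zero.mp hk1)) 2
  have hpk : (3 : ℕ) ^ k ∣ (n + 1) * (n + 2) := by rw [h]; exact ⟨2, mul_comm 2 _⟩
  rcases (Nat.Prime.dvd_mul hp).mp h3 with hd | hd
  · -- 3 ∣ n+1, so 3 ∤ n+2
    have hnd : ¬ (3 : ℕ) ∣ (n + 2) := by omega
    have hcop : Nat.Coprime (3 ^ k) (n + 2) :=
      Nat.Coprime.pow_left k ((Nat.Prime.coprime_iff_not_dvd hp).mpr hnd)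
    have hdvd : (3 : ℕ) ^ k ∣ (n + 1) := hcop.dvd_of_dvd_mul_right hpk
    obtain ⟨c, hc⟩ := hdvd
    have hpos : 0 < (3 : ℕ) ^ k := Nat.pow_pos (by norm_num)
    have : c * (n + 2) = 2 := by
      have : 3 ^ k * (c * (n + 2)) = 3 ^ k * 2 := by rw [← mul_assoc, ← hc]; linarith [h]
      exact Nat.eq_of_mul_eq_mul_left hpos this
    have : n + 2 ∣ 2 := Dvd.intro_left c this
    have := Nat.le_of_dvd (by norm_num) this
    omega
  · have hnd : ¬ (3 : ℕ) ∣ (n + 1) := by omega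
    have hcop : Nat.Coprime (3 ^ k) (n + 1) :=
      Nat.Coprime.pow_left k ((Nat.Prime.coprime_iff_not_dvd hp).mpr hnd)
    have hdvd : (3 : ℕ) ^ k ∣ (n + 2) := hcop.dvd_of_dvd_mul_left hpk
    obtain ⟨c, hc⟩ := hdvd
    have hpos : 0 < (3 : ℕ) ^ k := Nat.pow_pos (by norm_num)
    have : c * (n + 1) = 2 := by
      have : 3 ^ k * (c * (n + 1)) = 3 ^ k * 2 := by
        rw [← mul_assoc, ← hc]; linarith [h]
      exact Nat.eq_of_mul_eq_mul_left hpos this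
    have : n + 1 ∣ 2 := Dvd.intro_left c this
    have := Nat.le_of_dvd (by norm_num) this
    omega

lemma aux_real (n : ℕ) (hn : 2 ≤ n) :
    ¬ ∃ k : ℕ, ((n : ℝ) + 1) * ((n : ℝ) + 2) / 2 = 3 ^ k := by
  rintro ⟨k, h⟩
  apply aux_nat n hn
  refine ⟨k, ?_⟩
  have : ((n : ℝ) + 1) * ((n : ℝ) + 2) = 2 * 3 ^ k := by
    field_simp at h; linarith
  exact_mod_cast this

theorem stmt_3 (n : ℕ) (hn : 2 ≤ n) :
    (¬ ∃ k : ℕ, (n + 1) * (n + 2) = 2 * 3 ^ k) ∧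
    (¬ ∃ k : ℕ, ((n : ℝ) + 1) * ((n : ℝ) + 2) / 2 = 3 ^ k) ∧
    ¬ ∃ m : ℤ, Real.logb 3 (((n : ℝ) + 1) * ((n : ℝ) + 2) / 2) = (m : ℝ) := by
  refine ⟨aux_nat n hn, aux_real n hn, ?_⟩
  rintro ⟨m, hm⟩
  set x : ℝ := ((n : ℝ) + 1) * ((n : ℝ) + 2) / 2 with hx
  have hn2 : (2 : ℝ) ≤ (n : ℝ) := by exact_mod_cast hn
  have hx6 : (6 : ℝ) ≤ x := by rw [hx]; nlinarith
  have hxpos : 0 < x := by linarith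
  have hxe : x = (3 : ℝ) ^ (m : ℝ) := by
    rw [← hm, Real.rpow_logb (by norm_num) (by norm_num) hxpos]
  have hxz : x = (3 : ℝ) ^ m := by rw [hxe, Real.rpow_intCast]
  have hm0 : 0 ≤ m := by
    by_contra hneg
    push_neg at hneg
    have : (3 : ℝ) ^ m < 1 := by
      apply zpow_lt_one_of_neg₀ (by norm_num) hneg
    linarith [hxz ▸ this]
  apply aux_real n hn
  refine ⟨m.toNat, ?_⟩
  rw [← hx, hxz]
  rw [← zpow_natCast]
  congr 1
  omega
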